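/- arXiv:1405.1899 — 2 statements merged into one kernel-verified Lean document; each statement's English description precedes it below -/
import Mathlib

section
/- Suppose that T is a nonsoluble subgroup of a finite group H such that its normal closure ⟨T^H⟩ is equal to an (internal) direct product of conjugates of T, say ⟨T^H⟩ = T^{x_1} × ... × T^{x_n}, such that every conjugate of T appears among these factors (i.e. T^y ∈ {T^{x_1}, ..., T^{x_n}} for every y ∈ H), and suppose H = F*(H)⟨T^H⟩. Then T is normal in H. -/
open Subgroup
open scoped commutatorElement

/-- The conjugate of a subgroup: `S ^ g = { g s g⁻¹ }`. -/
def conjSubgroup {G : Type*} [Group G] (g : G) (S : Subgroup G) : Subgroup G :=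
  S.map (MulAut.conj g).toMonoidHom

/-- A subgroup is subnormal if it can be joined to the whole group by a chain
of successive normal inclusions. -/
def Subgroup.IsSubnormalChain {G : Type*} [Group G] (H : Subgroup G) : Prop :=
  ∃ (n : ℕ) (c : Fin (n + 1) → Subgroup G), c 0 = H ∧ c (Fin.last n) = ⊤ ∧
    ∀ i : Fin n, c i.castSucc ≤ c i.succ ∧
      ∀ x ∈ c i.succ, ∀ h ∈ c i.castSucc, x * h * x⁻¹ ∈ c i.castSucc

/-- A group is quasisimple if it is perfect and its central quotient is a
nonabelian simple group. -/
def IsQuasisimple (Q : Type*) [Group Q] : Prop :=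
  commutator Q = ⊤ ∧ IsSimpleGroup (Q ⧸ Subgroup.center Q) ∧
    ∃ a b : Q ⧸ Subgroup.center Q, a * b ≠ b * a

/-- The Fitting subgroup: the product (join) of all nilpotent normal subgroups. -/
def fittingSubgroup (G : Type*) [Group G] : Subgroup G :=
  sSup {H : Subgroup G | H.Normal ∧ Group.IsNilpotent H}

/-- The generalized Fitting subgroup `F*(G)`: the product of the Fitting subgroup
and all subnormal quasisimple subgroups. -/
def generalizedFitting (G : Type*) [Group G] : Subgroup G :=
  fittingSubgroup G ⊔ sSup {Q : Subgroup G | Q.IsSubnormalChain ∧ IsQuasisimple Q}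

open scoped Classical in
/-- The generalized Fitting series, `F*_0(G) = 1` and `F*_{i+1}(G)` the preimage
of `F*(G / F*_i(G))`. (The terms of the series are indeed normal, so the `⊤`
default branch is never taken.) -/
noncomputable def generalizedFittingSeries (G : Type*) [Group G] : ℕ → Subgroup G
  | 0 => ⊥
  | n + 1 =>
    if h : (generalizedFittingSeries G n).Normal then
      letI := h
      (generalizedFitting (G ⧸ generalizedFittingSeries G n)).comap
        (QuotientGroup.mk' (generalizedFittingSeries G n))
    else ⊤

/-- The generalized Fitting height `h*(G)`: the least `h` with `F*_h(G) = G`. -/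
noncomputable def generalizedFittingHeight (G : Type*) [Group G] : ℕ :=
  sInf {h : ℕ | generalizedFittingSeries G h = ⊤}

open scoped Classical in
/-- The Fitting series. -/
noncomputable def fittingSeries (G : Type*) [Group G] : ℕ → Subgroup G
  | 0 => ⊥
  | n + 1 =>
    if h : (fittingSeries G n).Normal then
      letI := h
      (fittingSubgroup (G ⧸ fittingSeries G n)).comap
        (QuotientGroup.mk' (fittingSeries G n))
    else ⊤

/-- The Fitting height. -/
noncomputable def fittingHeight (G : Type*) [Group G] : ℕ :=
  sInf {h : ℕ | fittingSeries G h = ⊤}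

/-- The derived length: the least `n` with `G^{(n)} = 1`. -/
noncomputable def derivedLength (G : Type*) [Group G] : ℕ :=
  sInf {n : ℕ | derivedSeries G n = ⊥}

/-- The soluble radical: the product (join) of all soluble normal subgroups. -/
def solubleRadical (G : Type*) [Group G] : Subgroup G :=
  sSup {H : Subgroup G | H.Normal ∧ IsSolvable H}

/-- A group is an (internal) direct product of nonabelian simple groups. -/
def IsProdOfNonabelianSimples (Q : Type*) [Group Q] : Prop :=
  ∃ (m : ℕ) (S : Fin m → Subgroup Q),
    (∀ i, (S i).Normal) ∧ (∀ i, IsSimpleGroup (S i)) ∧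
    (∀ i, ∃ a b : S i, a * b ≠ b * a) ∧
    iSupIndep S ∧ iSup S = ⊤

/-- The section `M/N` (for `N ≤ M` with `N.subgroupOf M` normal) is soluble. -/
def SectionIsSolvable {G : Type*} [Group G] (N M : Subgroup G) : Prop :=
  N ≤ M ∧ ∃ _h : (N.subgroupOf M).Normal, IsSolvable (M ⧸ N.subgroupOf M)

/-- The section `M/N` is a direct product of nonabelian simple groups. -/
def SectionIsProdOfNonabelianSimples {G : Type*} [Group G] (N M : Subgroup G) : Prop :=
  N ≤ M ∧ ∃ _h : (N.subgroupOf M).Normal,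
    IsProdOfNonabelianSimples (M ⧸ N.subgroupOf M)

/-- The nonsoluble length `λ(G)`: the least number of nonsoluble factors in a
normal series each of whose factors either is soluble or is a direct product of
nonabelian simple groups. -/
noncomputable def nonsolubleLength (G : Type*) [Group G] : ℕ :=
  sInf {n : ℕ | ∃ (k : ℕ) (N : Fin (k + 1) → Subgroup G), Monotone N ∧
    N 0 = ⊥ ∧ N (Fin.last k) = ⊤ ∧ (∀ i, (N i).Normal) ∧
    (∀ i : Fin k, SectionIsSolvable (N i.castSucc) (N i.succ) ∨
      SectionIsProdOfNonabelianSimples (N i.castSucc) (N i.succ)) ∧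
    n = Nat.card {i : Fin k // ¬ SectionIsSolvable (N i.castSucc) (N i.succ)}}

section Lemmas

variable {G : Type*} [Group G]

lemma mem_conjSubgroup {g a : G} {S : Subgroup G} :
    a ∈ conjSubgroup g S ↔ ∃ s ∈ S, g * s * g⁻¹ = a := by
  simp [conjSubgroup, Subgroup.mem_map, MulAut.conj_apply]

lemma conjSubgroup_one (S : Subgroup G) : conjSubgroup (1 : G) S = S := by
  ext a; simp [mem_conjSubgroup]

lemma mem_normalizer_of_conjSubgroup_eq {g : G} {S : Subgroup G}
    (h : conjSubgroup g S = S) : g ∈ normalizer (S : Set G) := by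
  rw [Subgroup.mem_normalizer_iff]
  intro t
  constructor
  · intro ht
    rw [← h]
    exact mem_conjSubgroup.mpr ⟨t, ht, rfl⟩
  · intro ht
    rw [← h] at ht
    obtain ⟨s, hs, hse⟩ := mem_conjSubgroup.mp ht
    have hst : s = t := mul_left_cancel (mul_right_cancel hse)
    exact hst ▸ hs

lemma solvable_of_commutator_le (K F : Subgroup G)
    (h : ⁅K, K⁆ ≤ F) (hF : Group.IsSolvable ↥F) : IsSolvable ↥K := by
  have hDK : ⁅K, K⁆ ≤ K := by
    rw [Subgroup.commutator_le]
    intro a ha b hb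
    rw [commutatorElement_def]
    exact K.mul_mem (K.mul_mem (K.mul_mem ha hb) (K.inv_mem ha)) (K.inv_mem hb)
  haveI : Group.IsSolvable ↥(⁅K, K⁆ : Subgroup G) :=
    solvable_of_solvable_injective (Subgroup.inclusion_injective h)
  haveI : Group.IsSolvable (↥K ⧸ commutator ↥K) := by
    apply isSolvable_of_comm
    intro a b
    obtain ⟨a, rfl⟩ := QuotientGroup.mk_surjective a
    obtain ⟨b, rfl⟩ := QuotientGroup.mk_surjective b
    rw [← QuotientGroup.mk_mul, ← QuotientGroup.mk_mul, QuotientGroup.eq]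
    have : (a * b)⁻¹ * (b * a) = ⁅b⁻¹, a⁻¹⁆ := by group
    rw [this]
    exact Subgroup.commutator_mem_commutator (mem_top _) (mem_top _)
  exact solvable_of_ker_le_range (Subgroup.inclusion hDK)
    (QuotientGroup.mk' (commutator ↥K)) (by
      rw [QuotientGroup.ker_mk', Subgroup.inclusion_range]
      show commutator ↥K ≤ (⁅K, K⁆ : Subgroup G).subgroupOf K
      rw [show _root_.commutator ↥K = ⁅(⊤ : Subgroup ↥K), ⊤⁆ from rfl, Subgroup.commutator_le]
      intro g₁ _ g₂ _
      rw [Subgroup.mem_subgroupOf]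
      have : ((⁅g₁, g₂⁆ : ↥K) : G) = ⁅(g₁ : G), (g₂ : G)⁆ := rfl
      rw [this]
      exact Subgroup.commutator_mem_commutator g₁.2 g₂.2)

lemma commutator_central_right {g m z : G}
    (h : ∀ a, a * z = z * a) : ⁅g, m * z⁆ = ⁅g, m⁆ := by
  have hz : z * g⁻¹ = g⁻¹ * z := (h g⁻¹).symm
  calc ⁅g, m * z⁆ = g * m * (z * g⁻¹) * z⁻¹ * m⁻¹ := by
        rw [commutatorElement_def]; group
    _ = g * m * (g⁻¹ * z) * z⁻¹ * m⁻¹ := by rw [hz]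
    _ = ⁅g, m⁆ := by rw [commutatorElement_def]; group

lemma commutator_central_left {g m z : G}
    (h : ∀ a, a * z = z * a) : ⁅m * z, g⁆ = ⁅m, g⁆ := by
  have hz : z * g = g * z := (h g).symm
  calc ⁅m * z, g⁆ = m * (z * g) * z⁻¹ * m⁻¹ * g⁻¹ := by
        rw [commutatorElement_def]; group
    _ = m * (g * z) * z⁻¹ * m⁻¹ * g⁻¹ := by rw [hz]
    _ = ⁅m, g⁆ := by rw [commutatorElement_def]; group

lemma commutator_mul_central {m₁ m₂ z₁ z₂ : G}
    (h₁ : ∀ a, a * z₁ = z₁ * a) (h₂ : ∀ a, a * z₂ = z₂ * a) :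
    ⁅m₁ * z₁, m₂ * z₂⁆ = ⁅m₁, m₂⁆ := by
  rw [commutator_central_right h₂, commutator_central_left h₁]

lemma quasisimple_dichotomy (Q M : Subgroup G)
    (hperf : ⁅Q, Q⁆ = Q) (hsim : IsSimpleGroup (↥Q ⧸ Subgroup.center ↥Q))
    (hMQ : M ≤ Q) (hconj : ∀ q ∈ Q, ∀ m ∈ M, q * m * q⁻¹ ∈ M) :
    Q ≤ M ∨ ⁅Q, M⁆ = ⊥ := by
  set M' := M.subgroupOf Q with hM'
  have hM'norm : M'.Normal := by
    constructor
    intro m hm q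
    rw [hM', Subgroup.mem_subgroupOf] at hm ⊢
    exact hconj q q.2 m hm
  set π := QuotientGroup.mk' (Subgroup.center ↥Q) with hπ
  have : (M'.map π).Normal := hM'norm.map π (QuotientGroup.mk'_surjective _)
  rcases this.eq_bot_or_eq_top with hbot | htop
  · right
    rw [Subgroup.map_eq_bot_iff, QuotientGroup.ker_mk'] at hbot
    rw [eq_bot_iff, Subgroup.commutator_le]
    intro q hq m hm
    rw [Subgroup.mem_bot, commutatorElement_eq_one_iff_mul_comm]
    have hmQ : m ∈ Q := hMQ hm
    have hmem : (⟨m, hmQ⟩ : ↥Q) ∈ M' := by rw [hM', Subgroup.mem_subgroupOf]; exact hm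
    have hc := Subgroup.mem_center_iff.mp (hbot hmem) ⟨q, hq⟩
    exact congrArg Subtype.val hc
  · left
    have hperfQ : ⁅(⊤ : Subgroup ↥Q), (⊤ : Subgroup ↥Q)⁆ = (⊤ : Subgroup ↥Q) := by
      apply Subgroup.map_injective Q.subtype_injective
      rw [Subgroup.map_commutator, ← MonoidHom.range_eq_map, Subgroup.range_subtype, hperf,
        ← Subgroup.range_subtype Q, MonoidHom.range_eq_map]
    have hTopM' : (⊤ : Subgroup ↥Q) ≤ M' := by
      rw [← hperfQ, Subgroup.commutator_le]
      intro g₁ _ g₂ _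
      have hg₁ : π g₁ ∈ M'.map π := by rw [htop]; exact Subgroup.mem_top _
      have hg₂ : π g₂ ∈ M'.map π := by rw [htop]; exact Subgroup.mem_top _
      obtain ⟨m₁, hm₁, hem₁⟩ := Subgroup.mem_map.mp hg₁
      obtain ⟨m₂, hm₂, hem₂⟩ := Subgroup.mem_map.mp hg₂
      have hz₁ : m₁⁻¹ * g₁ ∈ Subgroup.center ↥Q := by
        rw [← QuotientGroup.ker_mk' (Subgroup.center ↥Q), MonoidHom.mem_ker, map_mul, map_inv,
          hem₁, ← hπ]
        group
      have hz₂ : m₂⁻¹ * g₂ ∈ Subgroup.center ↥Q := by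
        rw [← QuotientGroup.ker_mk' (Subgroup.center ↥Q), MonoidHom.mem_ker, map_mul, map_inv,
          hem₂, ← hπ]
        group
      have e₁ : g₁ = m₁ * (m₁⁻¹ * g₁) := by group
      have e₂ : g₂ = m₂ * (m₂⁻¹ * g₂) := by group
      rw [e₁, e₂, commutator_mul_central
        (fun a => (Subgroup.mem_center_iff.mp hz₁ a))
        (fun a => (Subgroup.mem_center_iff.mp hz₂ a))]
      exact M'.mul_mem (M'.mul_mem (M'.mul_mem hm₁ hm₂) (M'.inv_mem hm₁)) (M'.inv_mem hm₂)
    have : M' = ⊤ := top_le_iff.mp hTopM'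
    exact Subgroup.subgroupOf_eq_top.mp this

lemma subnormal_quasisimple_le_or_commutator_eq_bot
    (Q N : Subgroup G) (hsub : Q.IsSubnormalChain) (hperf : ⁅Q, Q⁆ = Q)
    (hsim : IsSimpleGroup (↥Q ⧸ Subgroup.center ↥Q)) (hN : N.Normal) :
    Q ≤ N ∨ ⁅Q, N⁆ = ⊥ := by
  obtain ⟨k, c, hc0, hclast, hstep⟩ := hsub
  have key : ∀ i : ℕ, ∀ hi : i ≤ k,
      Q ≤ c ⟨i, Nat.lt_succ_of_le hi⟩ ∧
        (Q ≤ N ∨ ⁅Q, N ⊓ c ⟨i, Nat.lt_succ_of_le hi⟩⁆ = ⊥) := by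
    intro i
    induction i with
    | zero =>
      intro _
      have h0 : c ⟨0, Nat.lt_succ_of_le (Nat.zero_le k)⟩ = Q := by
        rw [Fin.mk_zero]; exact hc0
      rw [h0]
      refine ⟨le_rfl, ?_⟩
      rcases quasisimple_dichotomy Q (N ⊓ Q) hperf hsim inf_le_right
        (fun q hq m hm => ⟨hN.conj_mem m hm.1 q, Q.mul_mem (Q.mul_mem hq hm.2) (Q.inv_mem hq)⟩)
        with hle | hbot
      · exact Or.inl (hle.trans inf_le_left)
      · exact Or.inr hbot
    | succ i ih =>
      intro hi
      have hik : i ≤ k := Nat.le_of_succ_le hi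
      obtain ⟨hQc, hdisj⟩ := ih hik
      have hilt : i < k := hi
      set j : Fin k := ⟨i, hilt⟩ with hj
      have hcs : j.castSucc = ⟨i, Nat.lt_succ_of_le hik⟩ := rfl
      have hsc : j.succ = ⟨i + 1, Nat.lt_succ_of_le hi⟩ := rfl
      obtain ⟨hmono, hnorm⟩ := hstep j
      rw [hcs, hsc] at hmono hnorm
      refine ⟨hQc.trans hmono, ?_⟩
      rcases hdisj with hle | hbot
      · exact Or.inl hle
      · right
        set Ci : Subgroup G := c ⟨i, Nat.lt_succ_of_le hik⟩
        set Cs : Subgroup G := c ⟨i + 1, Nat.lt_succ_of_le hi⟩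
        have hsubC : ⁅Q, N ⊓ Cs⁆ ≤ N ⊓ Ci := by
          rw [Subgroup.commutator_le]
          intro q hq m hm
          constructor
          · rw [commutatorElement_def]
            exact N.mul_mem (hN.conj_mem m hm.1 q) (N.inv_mem hm.1)
          · have : ⁅q, m⁆ = q * (m * q⁻¹ * m⁻¹) := by
              rw [commutatorElement_def]; group
            rw [this]
            exact Ci.mul_mem (hQc hq) (hnorm m hm.2 q⁻¹ (Ci.inv_mem (hQc hq)))
        have h1 : ⁅⁅Q, N ⊓ Cs⁆, Q⁆ = ⊥ := by
          rw [eq_bot_iff, ← hbot]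
          calc ⁅⁅Q, N ⊓ Cs⁆, Q⁆ ≤ ⁅N ⊓ Ci, Q⁆ := Subgroup.commutator_mono hsubC le_rfl
            _ = ⁅Q, N ⊓ Ci⁆ := Subgroup.commutator_comm _ _
        have h2 : ⁅⁅N ⊓ Cs, Q⁆, Q⁆ = ⊥ := by
          rw [Subgroup.commutator_comm (N ⊓ Cs) Q]; exact h1
        have h3 := Subgroup.commutator_commutator_eq_bot_of_rotate h1 h2
        rw [hperf] at h3
        exact h3
  obtain ⟨_, hd⟩ := key k le_rfl
  have hck : c ⟨k, Nat.lt_succ_of_le le_rfl⟩ = ⊤ := by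
    have : (⟨k, Nat.lt_succ_of_le le_rfl⟩ : Fin (k + 1)) = Fin.last k := rfl
    rw [this]; exact hclast
  rw [hck, inf_top_eq] at hd
  exact hd

end Lemmas

/-- If `T` is a nonsoluble subgroup of a finite group `H` whose normal closure
`⟨T^H⟩` is the direct product of conjugates `T^{x 1} × ⋯ × T^{x n}`, every
conjugate of `T` appears among these factors, and `H = F*(H)⟨T^H⟩`, then `T`
is normal in `H`. -/
theorem normal_of_nonsoluble_of_normalClosure_eq_directProduct
    {H : Type*} [Group H] [Finite H] (T : Subgroup H) (hT : ¬ IsSolvable T)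
    (n : ℕ) (x : Fin n → H)
    (hclosure : Subgroup.normalClosure (T : Set H) = ⨆ i, conjSubgroup (x i) T)
    (hindep : iSupIndep fun i => conjSubgroup (x i) T)
    (hcomm : ∀ i j, i ≠ j →
      ∀ a ∈ conjSubgroup (x i) T, ∀ b ∈ conjSubgroup (x j) T, a * b = b * a)
    (hall : ∀ y : H, ∃ i, conjSubgroup y T = conjSubgroup (x i) T)
    (hfact : generalizedFitting H ⊔ Subgroup.normalClosure (T : Set H) = ⊤) :
    T.Normal := by
  obtain ⟨i0, hi0⟩ := hall 1
  have hi0T : conjSubgroup (x i0) T = T := by rw [← hi0, conjSubgroup_one]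
  -- the normal closure normalizes T
  have hNnorm : Subgroup.normalClosure (T : Set H) ≤ normalizer (T : Set H) := by
    rw [hclosure]
    refine iSup_le fun i => ?_
    by_cases hcase : conjSubgroup (x i) T = T
    · rw [hcase]; exact Subgroup.le_normalizer
    · intro g hg
      have hne : i ≠ i0 := fun e => hcase (by rw [e, hi0T])
      have hcg : ∀ b ∈ T, g * b = b * g := fun b hb =>
        hcomm i i0 hne g hg b (by rw [hi0T]; exact hb)
      rw [Subgroup.mem_normalizer_iff]
      intro t
      constructor
      · intro ht
        have : g * t * g⁻¹ = t := by
          rw [hcg t ht]; group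
        rw [this]; exact ht
      · intro ht
        have : g * t * g⁻¹ = t := by
          have h1 := hcg _ ht
          have : g * (g * t * g⁻¹) * g⁻¹ = g * t * g⁻¹ := by rw [h1]; group
          have h2 : g * t * g⁻¹ = t := by
            have := mul_left_cancel (mul_right_cancel this)
            exact mul_left_cancel (mul_right_cancel ‹g * (g * t * g⁻¹) * g⁻¹ = g * t * g⁻¹›)
          exact h2
        rw [← this]; exact ht
  -- Fitting subgroup normalizes T
  have hFitting : fittingSubgroup H ≤ normalizer (T : Set H) := by
    refine sSup_le fun F hF => ?_
    obtain ⟨hFnorm, hFnilp⟩ := hF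
    intro f hf
    have hconjf : conjSubgroup f T = T := by
      by_contra hne
      obtain ⟨j, hj⟩ := hall f
      have hji : j ≠ i0 := fun e => hne (by rw [hj, e, hi0T])
      have hcom : ∀ a ∈ conjSubgroup f T, ∀ b ∈ T, a * b = b * a := by
        rw [hj]
        intro a ha b hb
        exact hcomm j i0 hji a ha b (by rw [hi0T]; exact hb)
      have hTT : ⁅T, T⁆ ≤ F := by
        rw [Subgroup.commutator_le]
        intro t1 ht1 t2 ht2
        set b := f * t1 * f⁻¹ with hbdef
        have hb : b ∈ conjSubgroup f T := mem_conjSubgroup.mpr ⟨t1, ht1, rfl⟩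
        set cc := b⁻¹ * t1 with hcdef
        have hcF : cc ∈ F := by
          have e : cc = f * (t1⁻¹ * f⁻¹ * t1) := by rw [hcdef, hbdef]; group
          rw [e]
          have : t1⁻¹ * f⁻¹ * t1 ∈ F := by
            have := hFnorm.conj_mem f⁻¹ (F.inv_mem hf) t1⁻¹
            rw [inv_inv] at this
            exact this
          exact F.mul_mem hf this
        have hbc : t1 = b * cc := by rw [hcdef]; group
        have hb2 : b * t2 = t2 * b := hcom b hb t2 ht2
        have hb2' : b⁻¹ * t2⁻¹ = t2⁻¹ * b⁻¹ := by
          rw [← mul_inv_rev, ← mul_inv_rev, hb2]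
        have key : ⁅t1, t2⁆ = b * ⁅cc, t2⁆ * b⁻¹ := by
          calc ⁅t1, t2⁆ = t1 * t2 * t1⁻¹ * t2⁻¹ := commutatorElement_def _ _
            _ = b * (cc * t2 * cc⁻¹) * (b⁻¹ * t2⁻¹) := by rw [hbc]; group
            _ = b * (cc * t2 * cc⁻¹) * (t2⁻¹ * b⁻¹) := by rw [hb2']
            _ = b * ⁅cc, t2⁆ * b⁻¹ := by rw [commutatorElement_def]; group
        have hcomF : ⁅cc, t2⁆ ∈ F := by
          have e : ⁅cc, t2⁆ = cc * (t2 * cc⁻¹ * t2⁻¹) := by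
            rw [commutatorElement_def]; group
          rw [e]
          exact F.mul_mem hcF (hFnorm.conj_mem cc⁻¹ (F.inv_mem hcF) t2)
        rw [key]
        exact hFnorm.conj_mem _ hcomF b
      have : IsSolvable ↥T := by
        haveI := hFnilp
        exact solvable_of_commutator_le T F hTT inferInstance
      exact hT this
    exact mem_normalizer_of_conjSubgroup_eq hconjf
  -- quasisimple subnormal subgroups normalize T
  have hQuasi : sSup {Q : Subgroup H | Q.IsSubnormalChain ∧ IsQuasisimple Q} ≤ normalizer (T : Set H) := by
    refine sSup_le fun Q hQ => ?_
    obtain ⟨hsub, hperf', hsim, _⟩ := hQ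
    have hperf : ⁅Q, Q⁆ = Q := by
      have := congrArg (Subgroup.map Q.subtype) hperf'
      rw [show _root_.commutator ↥Q = ⁅(⊤ : Subgroup ↥Q), ⊤⁆ from rfl,
        Subgroup.map_commutator, ← MonoidHom.range_eq_map, Subgroup.range_subtype] at this
      exact this
    rcases subnormal_quasisimple_le_or_commutator_eq_bot Q
      (Subgroup.normalClosure (T : Set H)) hsub hperf hsim Subgroup.normalClosure_normal
      with hle | hbot
    · exact hle.trans hNnorm
    · intro q hq
      have hcentral : ∀ t ∈ T, q * t = t * q := by
        intro t ht
        have : ⁅q, t⁆ ∈ (⊥ : Subgroup H) := by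
          rw [← hbot]
          exact Subgroup.commutator_mem_commutator hq (Subgroup.le_normalClosure ht)
        rw [Subgroup.mem_bot, commutatorElement_eq_one_iff_mul_comm] at this
        exact this
      rw [Subgroup.mem_normalizer_iff]
      intro t
      constructor
      · intro ht
        have : q * t * q⁻¹ = t := by rw [hcentral t ht]; group
        rw [this]; exact ht
      · intro ht
        have h1 := hcentral _ ht
        have h2 : q * t * q⁻¹ = t := by
          have : q * (q * t * q⁻¹) * q⁻¹ = q * t * q⁻¹ := by rw [h1]; group
          exact mul_left_cancel (mul_right_cancel this)
        rw [← h2]; exact ht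
  have hGF : generalizedFitting H ≤ normalizer (T : Set H) := sup_le hFitting hQuasi
  have htop : normalizer (T : Set H) = ⊤ :=
    top_le_iff.mp (hfact ▸ sup_le hGF hNnorm)
  exact Subgroup.normalizer_eq_top_iff.mp htop
end

section
/- Let G = AB be a finite group factorized by subgroups A and B of coprime orders, and suppose the soluble radical of G is trivial, so that F*(G) = S_1 × ... × S_m is a direct product of nonabelian simple subgroups S_i which G permutes by conjugation; write S_iA = S_i ∩ A and S_iB = S_i ∩ B. Let K_A = ⋂ {N_G(S_i) : S_iA is not a p-group for any prime p} and K_B = ⋂ {N_G(S_i) : S_iB is not a p-group for any prime p}. Then K_A and K_B are normal subgroups of G, F*(A) ≤ K_A, and F*(B) ≤ K_B. -/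
open Subgroup

namespace KAKB

open scoped commutatorElement

variable {G : Type*} [Group G]

theorem mem_conjSubgroup {g x : G} {S : Subgroup G} :
    x ∈ conjSubgroup g S ↔ g⁻¹ * x * g ∈ S := by
  constructor
  · rintro ⟨y, hy, rfl⟩
    simpa [MulAut.conj_apply, mul_assoc] using hy
  · intro h
    exact ⟨g⁻¹ * x * g, h, by simp [MulAut.conj_apply, mul_assoc]⟩

theorem conjSubgroup_conjSubgroup (g : G) (S : Subgroup G) :
    conjSubgroup g (conjSubgroup g⁻¹ S) = S := by
  ext x
  simp [mem_conjSubgroup, mul_assoc]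

theorem card_conjSubgroup (g : G) (S : Subgroup G) :
    Nat.card (conjSubgroup g S) = Nat.card S :=
  (Nat.card_congr (Subgroup.equivMapOfInjective S _ (MulAut.conj g).injective).toEquiv).symm

theorem conjSubgroup_inf (g : G) (S T : Subgroup G) :
    conjSubgroup g (S ⊓ T) = conjSubgroup g S ⊓ conjSubgroup g T := by
  ext x; simp [mem_conjSubgroup]

theorem conjSubgroup_eq_iff_mem_normalizer {g : G} {S : Subgroup G} :
    conjSubgroup g S = S ↔ g ∈ Subgroup.normalizer (S : Set G) := by
  rw [Subgroup.mem_normalizer_iff]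
  constructor
  · intro h x
    constructor
    · intro hx
      have : g * x * g⁻¹ ∈ conjSubgroup g S := mem_conjSubgroup.2 (by simpa [mul_assoc])
      rwa [h] at this
    · intro hx
      rw [← h] at hx
      simpa [mul_assoc] using mem_conjSubgroup.1 hx
  · intro h
    ext x
    rw [mem_conjSubgroup]
    constructor
    · intro hx
      have := (h _).1 hx
      simpa [mul_assoc] using this
    · intro hx
      exact (h _).2 (by simpa [mul_assoc] using hx)

theorem conjSubgroup_eq_self_of_mem {g : G} {A : Subgroup G} (hg : g ∈ A) :
    conjSubgroup g A = A :=
  conjSubgroup_eq_iff_mem_normalizer.2 (Subgroup.le_normalizer hg)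

theorem conjSubgroup_mono {g : G} {S T : Subgroup G} (h : S ≤ T) :
    conjSubgroup g S ≤ conjSubgroup g T :=
  Subgroup.map_mono h

theorem conjSubgroup_iSup {ι : Sort*} (g : G) (S : ι → Subgroup G) :
    conjSubgroup g (⨆ i, S i) = ⨆ i, conjSubgroup g (S i) :=
  Subgroup.map_iSup _ S


variable {G : Type*} [Group G]

theorem card_subgroupOf (N A : Subgroup G) : Nat.card (N.subgroupOf A) = Nat.card (N ⊓ A : Subgroup G) := by
  have h1 : N.subgroupOf A = (N ⊓ A).subgroupOf A := by
    ext x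
    simp [Subgroup.mem_subgroupOf, x.2]
  rw [h1]
  exact Nat.card_congr (Subgroup.subgroupOfEquivOfLe inf_le_right).toEquiv

theorem card_top_eq [Finite G] {A B : Subgroup G}
    (hfact : ∀ g : G, ∃ a ∈ A, ∃ b ∈ B, g = a * b)
    (hcop : Nat.Coprime (Nat.card A) (Nat.card B)) :
    Nat.card G = Nat.card A * Nat.card B := by
  have hdvd : Nat.card A * Nat.card B ∣ Nat.card G :=
    Nat.Coprime.mul_dvd_of_dvd_of_dvd hcop A.card_subgroup_dvd_card B.card_subgroup_dvd_card
  have hle : Nat.card G ≤ Nat.card A * Nat.card B := by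
    rw [← Nat.card_prod]
    apply Nat.card_le_card_of_surjective (fun p : A × B => (p.1 : G) * (p.2 : G))
    intro g
    obtain ⟨a, ha, b, hb, rfl⟩ := hfact g
    exact ⟨(⟨a, ha⟩, ⟨b, hb⟩), rfl⟩
  exact le_antisymm hle (Nat.le_of_dvd Nat.card_pos hdvd)

theorem card_inf_mul_card_inf [Finite G] {A B N : Subgroup G}
    (hfact : ∀ g : G, ∃ a ∈ A, ∃ b ∈ B, g = a * b)
    (hcop : Nat.Coprime (Nat.card A) (Nat.card B)) (hN : N.Normal) :
    Nat.card (N ⊓ A : Subgroup G) * Nat.card (N ⊓ B : Subgroup G) = Nat.card N := by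
  set a := Nat.card (N ⊓ A : Subgroup G) with ha
  set b := Nat.card (N ⊓ B : Subgroup G) with hb
  set n := Nat.card N with hn
  have haA : a ∣ Nat.card A := Subgroup.card_dvd_of_le inf_le_right
  have hbB : b ∣ Nat.card B := Subgroup.card_dvd_of_le inf_le_right
  have haN : a ∣ n := Subgroup.card_dvd_of_le inf_le_left
  have hbN : b ∣ n := Subgroup.card_dvd_of_le inf_le_left
  have hab : Nat.Coprime a b := Nat.Coprime.coprime_dvd_right hbB (Nat.Coprime.coprime_dvd_left haA hcop)
  have habn : a * b ∣ n := Nat.Coprime.mul_dvd_of_dvd_of_dvd hab haN hbN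
  -- key divisibility: n ∣ a * card B
  have key : ∀ (X : Subgroup G), Nat.Coprime (Nat.card X) (Nat.card G / Nat.card X) →
      True := fun _ _ => trivial
  have hdiv : ∀ (A' B' : Subgroup G), (∀ g : G, ∃ x ∈ A', ∃ y ∈ B', g = x * y) →
      Nat.Coprime (Nat.card A') (Nat.card B') →
      n ∣ Nat.card (N ⊓ A' : Subgroup G) * Nat.card B' := by
    intro A' B' hfact' hcop'
    have e := QuotientGroup.quotientInfEquivProdNormalQuotient A' N
    set q := Nat.card (A' ⧸ N.subgroupOf A') with hq
    have hq2 : Nat.card ((A' ⊔ N : Subgroup G) ⧸ N.subgroupOf (A' ⊔ N)) = q := (Nat.card_congr e.toEquiv).symm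
    have hcardA : Nat.card A' = q * Nat.card (N ⊓ A' : Subgroup G) := by
      rw [Subgroup.card_eq_card_quotient_mul_card_subgroup (N.subgroupOf A'), card_subgroupOf]
    have hcardSup : Nat.card (A' ⊔ N : Subgroup G) = q * n := by
      rw [Subgroup.card_eq_card_quotient_mul_card_subgroup (N.subgroupOf (A' ⊔ N)), hq2,
        card_subgroupOf]
      congr 1
      have : N ⊓ (A' ⊔ N) = N := inf_eq_left.2 le_sup_right
      rw [this]
    have hsupdvd : Nat.card (A' ⊔ N : Subgroup G) ∣ Nat.card G :=
      Subgroup.card_subgroup_dvd_card _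
    rw [card_top_eq hfact' hcop', hcardSup, hcardA, mul_assoc] at hsupdvd
    have hqpos : 0 < q := Nat.card_pos
    exact (Nat.mul_dvd_mul_iff_left hqpos).1 hsupdvd
  have h1 : n ∣ a * Nat.card B := hdiv A B hfact hcop
  have h2 : n ∣ b * Nat.card A := by
    have := hdiv B A (fun g => by
      obtain ⟨x, hx, y, hy, hxy⟩ := hfact g⁻¹
      exact ⟨y⁻¹, inv_mem hy, x⁻¹, inv_mem hx, by rw [← mul_inv_rev, ← hxy, inv_inv]⟩) hcop.symm
    exact this
  obtain ⟨k, hk⟩ := habn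
  have hkB : k ∣ Nat.card B := by
    have : a * (b * k) ∣ a * Nat.card B := by rw [← mul_assoc, ← hk]; exact h1
    have hapos : 0 < a := Nat.card_pos
    exact dvd_trans (dvd_mul_left k b) ((Nat.mul_dvd_mul_iff_left hapos).1 this)
  have hkA : k ∣ Nat.card A := by
    have : b * (a * k) ∣ b * Nat.card A := by
      rw [← mul_assoc, mul_comm b a, ← hk]; exact h2
    have hbpos : 0 < b := Nat.card_pos
    exact dvd_trans (dvd_mul_left k a) ((Nat.mul_dvd_mul_iff_left hbpos).1 this)
  have hk1 : k = 1 := Nat.eq_one_of_dvd_coprimes hcop hkA hkB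
  rw [hk, hk1, mul_one]

theorem inf_bot_of_coprime {A B : Subgroup G} [Finite G]
    (hcop : Nat.Coprime (Nat.card A) (Nat.card B)) : A ⊓ B = ⊥ := by
  have h1 : Nat.card (A ⊓ B : Subgroup G) ∣ Nat.card A := Subgroup.card_dvd_of_le inf_le_left
  have h2 : Nat.card (A ⊓ B : Subgroup G) ∣ Nat.card B := Subgroup.card_dvd_of_le inf_le_right
  exact Subgroup.card_eq_one.1 (Nat.eq_one_of_dvd_coprimes hcop h1 h2)

theorem inf_factorization [Finite G] {A B N : Subgroup G}
    (hfact : ∀ g : G, ∃ a ∈ A, ∃ b ∈ B, g = a * b)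
    (hcop : Nat.Coprime (Nat.card A) (Nat.card B)) (hN : N.Normal) :
    ∀ n ∈ N, ∃ a ∈ N ⊓ A, ∃ b ∈ N ⊓ B, n = a * b := by
  set f : (N ⊓ A : Subgroup G) × (N ⊓ B : Subgroup G) → N :=
    fun p => ⟨(p.1 : G) * (p.2 : G), N.mul_mem p.1.2.1 p.2.2.1⟩ with hf
  have hinj : Function.Injective f := by
    rintro ⟨x1, y1⟩ ⟨x2, y2⟩ h
    have h' : (x1 : G) * y1 = (x2 : G) * y2 := congrArg Subtype.val h
    have hmem : (x2 : G)⁻¹ * x1 ∈ A ⊓ B := by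
      constructor
      · exact A.mul_mem (A.inv_mem x2.2.2) x1.2.2
      · have : (x2 : G)⁻¹ * x1 = (y2 : G) * (y1 : G)⁻¹ := by
          calc (x2 : G)⁻¹ * x1 = (x2 : G)⁻¹ * ((x1 : G) * y1) * (y1 : G)⁻¹ := by group
          _ = (x2 : G)⁻¹ * ((x2 : G) * y2) * (y1 : G)⁻¹ := by rw [h']
          _ = (y2 : G) * (y1 : G)⁻¹ := by group
        rw [this]
        exact B.mul_mem y2.2.2 (B.inv_mem y1.2.2)
    rw [inf_bot_of_coprime hcop] at hmem
    have hx : (x1 : G) = x2 := by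
      have := Subgroup.mem_bot.1 hmem
      rw [inv_mul_eq_one] at this
      rw [this]
    have hy : (y1 : G) = y2 := by
      have := h'
      rw [hx] at this
      exact mul_left_cancel this
    simp only [Prod.mk.injEq]
    exact ⟨Subtype.ext hx, Subtype.ext hy⟩
  have hbij : Function.Bijective f :=
    (Nat.bijective_iff_injective_and_card f).2
      ⟨hinj, by rw [Nat.card_prod]; exact card_inf_mul_card_inf hfact hcop hN⟩
  intro n hn
  obtain ⟨⟨x, y⟩, hp⟩ := hbij.2 ⟨n, hn⟩
  exact ⟨x, x.2, y, y.2, (congrArg Subtype.val hp).symm⟩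

theorem card_inf_eq_of_le_normalizer [Finite G] {A B F N : Subgroup G}
    (hfact : ∀ g : G, ∃ a ∈ A, ∃ b ∈ B, g = a * b)
    (hcop : Nat.Coprime (Nat.card A) (Nat.card B)) (hF : F.Normal)
    (hNF : N ≤ F) (hnorm : F ≤ Subgroup.normalizer (N : Set G)) :
    Nat.card (N ⊓ A : Subgroup G) * Nat.card (N ⊓ B : Subgroup G) = Nat.card N := by
  have hfactF := inf_factorization hfact hcop hF
  have hfact' : ∀ x : F, ∃ a ∈ A.subgroupOf F, ∃ b ∈ B.subgroupOf F, x = a * b := by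
    intro x
    obtain ⟨a, ha, b, hb, hab⟩ := hfactF x x.2
    exact ⟨⟨a, ha.1⟩, ha.2, ⟨b, hb.1⟩, hb.2, Subtype.ext hab⟩
  have hcop' : Nat.Coprime (Nat.card (A.subgroupOf F)) (Nat.card (B.subgroupOf F)) := by
    rw [card_subgroupOf, card_subgroupOf]
    exact Nat.Coprime.coprime_dvd_right (Subgroup.card_dvd_of_le inf_le_left)
      (Nat.Coprime.coprime_dvd_left (Subgroup.card_dvd_of_le inf_le_left) hcop)
  have hN' : (N.subgroupOf F).Normal := by
    constructor
    intro n hn g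
    rw [Subgroup.mem_subgroupOf] at hn ⊢
    have hg := Subgroup.mem_normalizer_iff.1 (hnorm g.2)
    simpa using (hg (n : G)).1 hn
  have hmain := card_inf_mul_card_inf hfact' hcop' hN'
  have e1 : N.subgroupOf F ⊓ A.subgroupOf F = (N ⊓ A).subgroupOf F := by
    ext x; simp [Subgroup.mem_subgroupOf]
  have e2 : N.subgroupOf F ⊓ B.subgroupOf F = (N ⊓ B).subgroupOf F := by
    ext x; simp [Subgroup.mem_subgroupOf]
  rw [e1, e2, card_subgroupOf, card_subgroupOf, card_subgroupOf] at hmain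
  have r1 : N ⊓ A ⊓ F = N ⊓ A := inf_eq_left.2 (le_trans inf_le_left hNF)
  have r2 : N ⊓ B ⊓ F = N ⊓ B := inf_eq_left.2 (le_trans inf_le_left hNF)
  have r3 : N ⊓ F = N := inf_eq_left.2 hNF
  rw [r1, r2, r3] at hmain
  exact hmain


section Helpers
variable {H : Type*} [Group H]



theorem orderOf_coe {K : Subgroup H} (u : K) : orderOf (u : H) = orderOf u :=
  orderOf_injective K.subtype K.subtype_injective u

theorem orderOf_conj' (g w : H) : orderOf (g * w * g⁻¹) = orderOf w := by
  have := orderOf_injective (MulAut.conj g).toMonoidHom (MulAut.conj g).injective w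
  simpa using this

theorem p_elt_in_normal_psubgroup [Finite H] {P : Subgroup H} (hP : P.Normal)
    (hnil : Group.IsNilpotent P) {p : ℕ} (hp : p.Prime) {y : H} (hy : y ∈ P)
    (hord : ∃ k, orderOf y = p ^ k) :
    ∃ W : Subgroup H, W.Normal ∧ IsPGroup p W ∧ y ∈ W := by
  haveI : Fact p.Prime := ⟨hp⟩
  set y' : P := ⟨y, hy⟩ with hy'
  have hord' : ∃ k, orderOf y' = p ^ k := by
    obtain ⟨k, hk⟩ := hord
    exact ⟨k, by rw [← hk]; exact (orderOf_coe y' : orderOf (y' : H) = orderOf y').symm ▸ rfl⟩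
  have hpg : IsPGroup p (Subgroup.zpowers y') := by
    obtain ⟨k, hk⟩ := hord'
    exact IsPGroup.of_card (by rw [Nat.card_zpowers, hk])
  obtain ⟨Pl, hPl⟩ := hpg.exists_le_sylow
  have hPlnormal : (Pl : Subgroup P).Normal := by
    have tfae := isNilpotent_of_finite_tfae (G := P)
    have h14 := tfae.out 0 3
    exact h14.1 hnil p ⟨hp⟩ Pl
  haveI := Sylow.unique_of_normal Pl hPlnormal
  have hpelt_mem : ∀ z : P, (∃ k, orderOf z = p ^ k) → z ∈ (Pl : Subgroup P) := by
    intro z hz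
    have hzp : IsPGroup p (Subgroup.zpowers z) := by
      obtain ⟨k, hk⟩ := hz
      exact IsPGroup.of_card (by rw [Nat.card_zpowers, hk])
    obtain ⟨Ql, hQl⟩ := hzp.exists_le_sylow
    have : Ql = Pl := Subsingleton.elim _ _
    exact this ▸ hQl (Subgroup.mem_zpowers z)
  refine ⟨(Pl : Subgroup P).map P.subtype, ?_, Pl.isPGroup'.map P.subtype,
    ⟨y', hPl (Subgroup.mem_zpowers y'), rfl⟩⟩
  constructor
  intro w hw g
  obtain ⟨w₀, hw₀, rfl⟩ := hw
  have hgw : g * (P.subtype w₀ : H) * g⁻¹ ∈ P := hP.conj_mem _ w₀.2 g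
  have hw₀ord : ∃ j, orderOf w₀ = p ^ j := by
    obtain ⟨k2, hk2⟩ := Pl.isPGroup' ⟨w₀, hw₀⟩
    have h' : w₀ ^ (p ^ k2) = 1 := by
      simpa using congrArg (Subtype.val) hk2
    obtain ⟨j, _, hj⟩ := (Nat.dvd_prime_pow hp).1 (orderOf_dvd_of_pow_eq_one h')
    exact ⟨j, hj⟩
  obtain ⟨j, hj⟩ := hw₀ord
  refine ⟨⟨g * (P.subtype w₀ : H) * g⁻¹, hgw⟩, hpelt_mem _ ⟨j, ?_⟩, rfl⟩
  have e1 : orderOf (⟨g * (P.subtype w₀ : H) * g⁻¹, hgw⟩ : P) =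
      orderOf (g * (P.subtype w₀ : H) * g⁻¹) := (orderOf_coe _).symm
  have e2 : orderOf (g * (P.subtype w₀ : H) * g⁻¹) = orderOf (P.subtype w₀ : H) :=
    orderOf_conj' g _
  have e3 : orderOf (P.subtype w₀ : H) = orderOf w₀ := orderOf_coe w₀
  rw [e1, e2, e3, hj]

theorem exists_prime_pow_decomp [Finite H] (x : H) :
    ∃ l : List H, (∀ z ∈ l, z ∈ Subgroup.zpowers x ∧ ∃ p : ℕ, p.Prime ∧ ∃ k, orderOf z = p ^ k) ∧
      l.prod = x := by
  have key : ∀ n : ℕ, ∀ x : H, orderOf x = n → ∃ l : List H,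
      (∀ z ∈ l, z ∈ Subgroup.zpowers x ∧ ∃ p : ℕ, p.Prime ∧ ∃ k, orderOf z = p ^ k) ∧
      l.prod = x := by
    intro n
    induction n using Nat.strong_induction_on with
    | _ n ih =>
      intro x hx
      have hn0 : n ≠ 0 := by
        rw [← hx]
        exact (orderOf_pos x).ne'
      rcases eq_or_ne n 1 with h1 | h1
      · have hx1 : x = 1 := orderOf_eq_one_iff.mp (by rw [hx, h1])
        exact ⟨[], by simp, by simp [hx1]⟩
      have hn2 : 2 ≤ n := by omega
      set p := n.minFac with hpdef
      have hp : p.Prime := Nat.minFac_prime h1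
      set k := n.factorization p with hkdef
      set m := n / p ^ k with hmdef
      have hnm : p ^ k * m = n := Nat.ordProj_mul_ordCompl_eq_self n p
      have hcop : Nat.Coprime (p ^ k) m :=
        Nat.Coprime.pow_left k (Nat.coprime_ordCompl hp hn0)
      have hm0 : 0 < m := Nat.ordCompl_pos p hn0
      have hmlt : m < n := by
        have hpk : 1 < p ^ k := by
          have hk1 : 1 ≤ k := hp.factorization_pos_of_dvd hn0 n.minFac_dvd
          calc 1 < p := hp.one_lt
          _ ≤ p ^ k := Nat.le_self_pow (by omega) p
        calc m = 1 * m := (one_mul m).symm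
        _ < p ^ k * m := (Nat.mul_lt_mul_right hm0).2 hpk
        _ = n := hnm
      obtain ⟨α, β, hαβ⟩ : ∃ α β : ℤ, ((p ^ k : ℕ) : ℤ) * α + ((m : ℕ) : ℤ) * β = 1 := by
        refine ⟨Nat.gcdA (p ^ k) m, Nat.gcdB (p ^ k) m, ?_⟩
        have h := Nat.gcd_eq_gcd_ab (p ^ k) m
        rw [hcop] at h
        push_cast at h ⊢
        linarith
      set z := x ^ (((p ^ k : ℕ) : ℤ) * α) with hzdef
      set y := x ^ (((m : ℕ) : ℤ) * β) with hydef
      have hzy : z * y = x := by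
        rw [hzdef, hydef, ← zpow_add, hαβ, zpow_one]
      have hyord : ∃ j, orderOf y = p ^ j := by
        have hpow : y ^ (p ^ k) = 1 := by
          rw [hydef, ← zpow_natCast, ← zpow_mul]
          have e : ((m : ℕ) : ℤ) * β * ((p ^ k : ℕ) : ℤ) = ((n : ℕ) : ℤ) * β := by
            push_cast
            rw [← hnm]
            push_cast
            ring
          rw [e, zpow_mul, zpow_natCast, ← hx, pow_orderOf_eq_one, one_zpow]
        obtain ⟨j, _, hj⟩ := (Nat.dvd_prime_pow hp).1 (orderOf_dvd_of_pow_eq_one hpow)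
        exact ⟨j, hj⟩
      have hzord : orderOf z ∣ m := by
        apply orderOf_dvd_of_pow_eq_one
        rw [hzdef, ← zpow_natCast, ← zpow_mul]
        have e : ((p ^ k : ℕ) : ℤ) * α * ((m : ℕ) : ℤ) = ((n : ℕ) : ℤ) * α := by
          push_cast
          rw [← hnm]
          push_cast
          ring
        rw [e, zpow_mul, zpow_natCast, ← hx, pow_orderOf_eq_one, one_zpow]
      obtain ⟨l, hl, hlprod⟩ := ih (orderOf z)
        (lt_of_le_of_lt (Nat.le_of_dvd hm0 hzord) hmlt) z rfl
      refine ⟨l ++ [y], ?_, by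
        rw [List.prod_append, List.prod_cons, List.prod_nil, mul_one, hlprod, hzy]⟩
      intro w hw
      rcases List.mem_append.1 hw with hw | hw
      · obtain ⟨hw1, hw2⟩ := hl w hw
        refine ⟨?_, hw2⟩
        have hz : z ∈ Subgroup.zpowers x := ⟨((p ^ k : ℕ) : ℤ) * α, rfl⟩
        exact (Subgroup.zpowers_le.mpr hz) hw1
      · rw [List.mem_singleton] at hw
        subst hw
        exact ⟨⟨((m : ℕ) : ℤ) * β, rfl⟩, p, hp, hyord⟩
  exact key (orderOf x) x rfl




theorem commutator_mul_right_comm {t y : H} (h : Commute t y) (a : H) :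
    ⁅a * t, y⁆ = ⁅a, y⁆ := by
  have e : t * y * t⁻¹ = y := by rw [h.eq, mul_inv_cancel_right]
  calc ⁅a * t, y⁆ = a * (t * y * t⁻¹) * a⁻¹ * y⁻¹ := by
        rw [commutatorElement_def]; group
  _ = ⁅a, y⁆ := by rw [e, commutatorElement_def]

theorem commutator_mul_left_comm {s a : H} (h : Commute s a) (b : H) :
    ⁅a, b * s⁆ = ⁅a, b⁆ := by
  have e : s * a⁻¹ * s⁻¹ = a⁻¹ := by rw [h.inv_right.eq, mul_inv_cancel_right]
  calc ⁅a, b * s⁆ = a * b * (s * a⁻¹ * s⁻¹) * b⁻¹ := by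
        rw [commutatorElement_def]; group
  _ = ⁅a, b⁆ := by rw [e, commutatorElement_def]

theorem step_core {E C0 C1 Q : Subgroup H} (hE : E.Normal) (hQ0 : Q ≤ C0)
    (hconj : ∀ x ∈ C1, ∀ h ∈ C0, x * h * x⁻¹ ∈ C0)
    (hcent : ∀ q ∈ Q, ∀ z ∈ E ⊓ C0, q * z = z * q)
    {a b e : H} (ha : a ∈ Q) (hb : b ∈ Q) (he : e ∈ E ⊓ C1) :
    ⁅a, b⁆ * e = e * ⁅a, b⁆ := by
  obtain ⟨heE, heC⟩ := he
  have hmem : ∀ x ∈ Q, x⁻¹ * (e⁻¹ * x * e) ∈ E ⊓ C0 := by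
    intro x hx
    constructor
    · have h1 : x⁻¹ * (e⁻¹ * x * e) = (x⁻¹ * e⁻¹ * (x⁻¹)⁻¹) * e := by group
      rw [h1]
      exact E.mul_mem (hE.conj_mem _ (E.inv_mem heE) _) heE
    · have h1 : x⁻¹ * (e⁻¹ * x * e) = x⁻¹ * (e⁻¹ * x * (e⁻¹)⁻¹) := by group
      rw [h1]
      exact C0.mul_mem (C0.inv_mem (hQ0 hx)) (hconj e⁻¹ (C1.inv_mem heC) x (hQ0 hx))
  set t := a⁻¹ * (e⁻¹ * a * e) with htdef
  set s := b⁻¹ * (e⁻¹ * b * e) with hsdef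
  have ht : t ∈ E ⊓ C0 := hmem a ha
  have hs : s ∈ E ⊓ C0 := hmem b hb
  have hta : Commute t a := (hcent a ha t ht).symm
  have htb : Commute t b := (hcent b hb t ht).symm
  have hsa : Commute s a := (hcent a ha s hs).symm
  -- t commutes with s
  have ht' : e * t * e⁻¹ ∈ E ⊓ C0 := by
    constructor
    · exact hE.conj_mem _ ht.1 _
    · exact hconj e heC t ht.2
  have hts : Commute t s := by
    have htbinv : Commute t b⁻¹ := htb.inv_right
    have htconj : Commute t (e⁻¹ * b * e) := by
      have h1 : t * (e⁻¹ * b * e) = e⁻¹ * ((e * t * e⁻¹) * b) * e := by group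
      have h2 : (e * t * e⁻¹) * b = b * (e * t * e⁻¹) := (hcent b hb _ ht').symm
      have h3 : e⁻¹ * (b * (e * t * e⁻¹)) * e = (e⁻¹ * b * e) * t := by group
      show t * (e⁻¹ * b * e) = (e⁻¹ * b * e) * t
      rw [h1, h2, h3]
    exact htbinv.mul_right htconj
  have key : e⁻¹ * ⁅a, b⁆ * e = ⁅a * t, b * s⁆ := by
    have e1 : e⁻¹ * ⁅a, b⁆ * e = ⁅e⁻¹ * a * e, e⁻¹ * b * e⁆ := by
      rw [commutatorElement_def, commutatorElement_def]; group
    have e2 : a * t = e⁻¹ * a * e := by rw [htdef]; group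
    have e3 : b * s = e⁻¹ * b * e := by rw [hsdef]; group
    rw [e1, ← e2, ← e3]
  have k2 : ⁅a * t, b * s⁆ = ⁅a, b * s⁆ := commutator_mul_right_comm (htb.mul_right hts) a
  have k3 : ⁅a, b * s⁆ = ⁅a, b⁆ := commutator_mul_left_comm hsa b
  have hfin : e⁻¹ * ⁅a, b⁆ * e = ⁅a, b⁆ := by rw [key, k2, k3]
  calc ⁅a, b⁆ * e = e * (e⁻¹ * ⁅a, b⁆ * e) := by group
  _ = e * ⁅a, b⁆ := by rw [hfin]

theorem quasisimple_dichotomy {Q E : Subgroup H} (hsub : Q.IsSubnormalChain)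
    (hq : IsQuasisimple Q) (hE : E.Normal) :
    Q ≤ E ∨ ∀ q ∈ Q, ∀ e ∈ E, q * e = e * q := by
  obtain ⟨n, c, hc0, hctop, hchain⟩ := hsub
  have hQle : ∀ k : Fin (n + 1), Q ≤ c k := by
    intro k
    induction k using Fin.induction with
    | zero => rw [hc0]
    | succ i ih => exact le_trans ih (hchain i).1
  haveI hsimp := hq.2.1
  have main : ∀ k : Fin (n + 1), Q ≤ E ⊓ c k ∨ ∀ q ∈ Q, ∀ e ∈ E ⊓ c k, q * e = e * q := by
    intro k
    induction k using Fin.induction with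
    | zero =>
      rw [hc0]
      -- base case via quasisimplicity
      set N : Subgroup Q := (E ⊓ Q).subgroupOf Q with hNdef
      have hN : N.Normal := by
        constructor
        intro x hx g
        rw [hNdef, Subgroup.mem_subgroupOf] at hx ⊢
        refine ⟨?_, (g * x * g⁻¹).2⟩
        simpa using hE.conj_mem _ hx.1 (g : H)
      have hN' : (N.map (QuotientGroup.mk' (Subgroup.center Q))).Normal :=
        hN.map _ (QuotientGroup.mk'_surjective _)
      rcases hN'.eq_bot_or_eq_top with hbot | htop
      · right
        intro q hq' e he
        have heN : (⟨e, he.2⟩ : Q) ∈ N := by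
          rw [hNdef, Subgroup.mem_subgroupOf]
          exact he
        have hmk : QuotientGroup.mk' (Subgroup.center Q) ⟨e, he.2⟩ ∈
            N.map (QuotientGroup.mk' (Subgroup.center Q)) :=
          Subgroup.mem_map_of_mem _ heN
        rw [hbot, Subgroup.mem_bot] at hmk
        have hcen : (⟨e, he.2⟩ : Q) ∈ Subgroup.center Q :=
          (QuotientGroup.eq_one_iff _).1 hmk
        have := Subgroup.mem_center_iff.1 hcen ⟨q, hq'⟩
        simpa using congrArg Subtype.val this
      · left
        have hsub' : (⊤ : Subgroup Q) ≤ N := by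
          rw [← hq.1, commutator_def, Subgroup.commutator_le]
          intro g₁ _ g₂ _
          -- decompose g₁ g₂ modulo the center
          have hdec : ∀ g : Q, ∃ u ∈ N, ∃ z ∈ Subgroup.center Q, g = u * z := by
            intro g
            have : QuotientGroup.mk' (Subgroup.center Q) g ∈
                N.map (QuotientGroup.mk' (Subgroup.center Q)) := by
              rw [htop]; trivial
            obtain ⟨u, hu, huq⟩ := this
            refine ⟨u, hu, u⁻¹ * g, ?_, by group⟩
            have : QuotientGroup.mk' (Subgroup.center Q) (u⁻¹ * g) = 1 := by
              rw [map_mul, map_inv, huq]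
              group
            exact (QuotientGroup.eq_one_iff _).1 this
          obtain ⟨u₁, hu₁, z₁, hz₁, rfl⟩ := hdec g₁
          obtain ⟨u₂, hu₂, z₂, hz₂, rfl⟩ := hdec g₂
          have c₁ : Commute z₁ (u₂ * z₂) := (Subgroup.mem_center_iff.1 hz₁ _).symm
          have c₂ : Commute z₂ u₁ := (Subgroup.mem_center_iff.1 hz₂ _).symm
          rw [commutator_mul_right_comm c₁ u₁, commutator_mul_left_comm c₂ u₂]
          rw [commutatorElement_def]
          exact mul_mem (mul_mem (mul_mem hu₁ hu₂) (inv_mem hu₁)) (inv_mem hu₂)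
        intro q hq'
        have : (⟨q, hq'⟩ : Q) ∈ N := hsub' trivial
        rw [hNdef, Subgroup.mem_subgroupOf] at this
        exact this
    | succ i ih =>
      rcases ih with hle | hcent
      · left
        exact le_trans hle (inf_le_inf_left E (hchain i).1)
      · right
        intro q hq' e he
        have hqmem : (⟨q, hq'⟩ : Q) ∈ Subgroup.closure
            {x : Q | ∃ g₁ ∈ (⊤ : Subgroup Q), ∃ g₂ ∈ (⊤ : Subgroup Q), ⁅g₁, g₂⁆ = x} := by
          rw [← Subgroup.commutator_def, ← _root_.commutator_def, hq.1]
          trivial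
        refine Subgroup.closure_induction (p := fun (x : ↥Q) _ => (↑x : H) * e = e * (↑x : H)) ?_ ?_ ?_ ?_ hqmem
        · rintro x ⟨a, -, b, -, rfl⟩
          have : (↑(⁅a, b⁆ : Q) : H) = ⁅(a : H), (b : H)⁆ := rfl
          rw [this]
          exact step_core hE (hQle i.castSucc) (hchain i).2 hcent a.2 b.2 he
        · simp
        · intro x y _ _ hx hy
          push_cast
          rw [mul_assoc, hy, ← mul_assoc, hx, mul_assoc]
        · intro x _ hx
          push_cast
          calc (x : H)⁻¹ * e = (x : H)⁻¹ * (e * (x : H)) * (x : H)⁻¹ := by group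
          _ = (x : H)⁻¹ * ((x : H) * e) * (x : H)⁻¹ := by rw [hx]
          _ = e * (x : H)⁻¹ := by group
  rcases main (Fin.last n) with h | h
  · exact Or.inl (le_trans h inf_le_left)
  · right
    intro q hq' e he
    exact h q hq' e ⟨he, by rw [hctop]; trivial⟩


end Helpers


theorem conjSubgroup_mul (u v : G) (S : Subgroup G) :
    conjSubgroup (u * v) S = conjSubgroup u (conjSubgroup v S) := by
  ext x
  rw [mem_conjSubgroup, mem_conjSubgroup, mem_conjSubgroup]
  constructor
  · intro h
    have e : v⁻¹ * (u⁻¹ * x * u) * v = (u * v)⁻¹ * x * (u * v) := by group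
    rw [e]
    exact h
  · intro h
    have e : (u * v)⁻¹ * x * (u * v) = v⁻¹ * (u⁻¹ * x * u) * v := by group
    rw [e]
    exact h

theorem conjSubgroup_inv_eq {g : G} {S T : Subgroup G} (h : conjSubgroup g S = T) :
    conjSubgroup g⁻¹ T = S := by
  rw [← h]
  have := conjSubgroup_conjSubgroup g⁻¹ S
  rwa [inv_inv] at this

theorem S_le_normalizer {m : ℕ} {S : Fin m → Subgroup G}
    (hcomm : ∀ i j, i ≠ j → ∀ x ∈ S i, ∀ y ∈ S j, x * y = y * x) (k i : Fin m) :
    S k ≤ Subgroup.normalizer (S i : Set G) := by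
  by_cases h : k = i
  · subst h
    exact Subgroup.le_normalizer
  · intro x hx
    rw [Subgroup.mem_normalizer_iff]
    intro y
    constructor
    · intro hy
      have := hcomm k i h x hx y hy
      have e : x * y * x⁻¹ = y := by rw [this, mul_inv_cancel_right]
      rw [e]
      exact hy
    · intro hy
      have hc := hcomm k i h x⁻¹ ((S k).inv_mem hx) (x * y * x⁻¹) hy
      have hyw : y = x * y * x⁻¹ := by
        calc y = x⁻¹ * (x * y * x⁻¹) * x := by group
        _ = (x * y * x⁻¹) * x⁻¹ * x := by rw [hc]
        _ = x * y * x⁻¹ := by group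
      rw [show y ∈ S i ↔ x * y * x⁻¹ ∈ S i from by rw [← hyw]]
      exact hy

theorem K_normal [Finite G] (A B : Subgroup G)
    (hfact : ∀ g : G, ∃ a ∈ A, ∃ b ∈ B, g = a * b)
    (hcop : Nat.Coprime (Nat.card A) (Nat.card B))
    {m : ℕ} (S : Fin m → Subgroup G)
    (hcomm : ∀ i j, i ≠ j → ∀ x ∈ S i, ∀ y ∈ S j, x * y = y * x)
    (hperm : ∀ (g : G) (i : Fin m), ∃ j, conjSubgroup g (S i) = S j) :
    (⨅ i : {i : Fin m // ¬ ∃ p : ℕ, p.Prime ∧ IsPGroup p (S i ⊓ A : Subgroup G)},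
      Subgroup.normalizer (S i.1 : Set G)).Normal := by
  set F := ⨆ i, S i with hFdef
  have hFnorm : F.Normal := by
    constructor
    intro x hx g
    have hle : conjSubgroup g F ≤ F := by
      rw [hFdef, conjSubgroup_iSup]
      apply iSup_le
      intro i
      obtain ⟨j, hj⟩ := hperm g i
      rw [hj]
      exact le_iSup S j
    exact hle ⟨x, hx, rfl⟩
  have cardeq : ∀ i, Nat.card (S i ⊓ A : Subgroup G) * Nat.card (S i ⊓ B : Subgroup G) =
      Nat.card (S i) := fun i =>
    card_inf_eq_of_le_normalizer hfact hcop hFnorm (le_iSup S i)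
      (iSup_le fun k => S_le_normalizer hcomm k i)
  have auxdvd : ∀ (g : G) (i j : Fin m), conjSubgroup g (S i) = S j →
      Nat.card (S i ⊓ A : Subgroup G) ∣ Nat.card (S j ⊓ A : Subgroup G) := by
    intro g i j h
    have hc : Nat.card (S j) = Nat.card (S i) := by
      rw [← h, card_conjSubgroup]
    have h1 : Nat.card (S i ⊓ A : Subgroup G) ∣
        Nat.card (S j ⊓ A : Subgroup G) * Nat.card (S j ⊓ B : Subgroup G) := by
      rw [cardeq j, hc, ← cardeq i]
      exact Dvd.intro _ rfl
    have hcop' : Nat.Coprime (Nat.card (S i ⊓ A : Subgroup G))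
        (Nat.card (S j ⊓ B : Subgroup G)) :=
      Nat.Coprime.coprime_dvd_right (Subgroup.card_dvd_of_le inf_le_right)
        (Nat.Coprime.coprime_dvd_left (Subgroup.card_dvd_of_le inf_le_right) hcop)
    exact hcop'.dvd_of_dvd_mul_right h1
  have cardinv : ∀ (g : G) (i j : Fin m), conjSubgroup g (S i) = S j →
      Nat.card (S i ⊓ A : Subgroup G) = Nat.card (S j ⊓ A : Subgroup G) := by
    intro g i j h
    exact Nat.dvd_antisymm (auxdvd g i j h) (auxdvd g⁻¹ j i (conjSubgroup_inv_eq h))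
  constructor
  intro x hx g
  rw [Subgroup.mem_iInf] at hx ⊢
  rintro ⟨i, hibad⟩
  obtain ⟨i', hi'⟩ := hperm g⁻¹ i
  have hgi : conjSubgroup g (S i') = S i := by
    rw [← hi']
    exact conjSubgroup_conjSubgroup g (S i)
  have hbad' : ¬ ∃ p : ℕ, p.Prime ∧ IsPGroup p (S i' ⊓ A : Subgroup G) := by
    rintro ⟨p, hp, hpg⟩
    apply hibad
    refine ⟨p, hp, ?_⟩
    haveI : Fact p.Prime := ⟨hp⟩
    rw [IsPGroup.iff_card] at hpg ⊢
    rwa [cardinv g⁻¹ i i' hi']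
  have hx' := hx ⟨i', hbad'⟩
  rw [← conjSubgroup_eq_iff_mem_normalizer] at hx' ⊢
  rw [conjSubgroup_mul, conjSubgroup_mul, hi', hx', hgi]

theorem genFitting_le_normalizer [Finite G] (A : Subgroup G)
    {m : ℕ} (S : Fin m → Subgroup G) (hindep : iSupIndep S)
    (hcomm : ∀ i j, i ≠ j → ∀ x ∈ S i, ∀ y ∈ S j, x * y = y * x)
    (hperm : ∀ (g : G) (i : Fin m), ∃ j, conjSubgroup g (S i) = S j) (i : Fin m)
    (hbad : ¬ ∃ p : ℕ, p.Prime ∧ IsPGroup p (S i ⊓ A : Subgroup G)) :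
    Subgroup.map A.subtype (generalizedFitting A) ≤ Subgroup.normalizer (S i : Set G) := by
  have hdisj : ∀ j k, j ≠ k → S j ⊓ S k = ⊥ := by
    intro j k hjk
    exact disjoint_iff.1 (hindep.pairwiseDisjoint hjk)
  set D := S i ⊓ A with hDdef
  have hDbot : D ≠ ⊥ := by
    intro h
    exact hbad ⟨2, Nat.prime_two, by rw [h]; exact IsPGroup.of_bot⟩
  -- x ∈ A fixing D normalizes S i
  have stab : ∀ x ∈ A, conjSubgroup x D = D → x ∈ Subgroup.normalizer (S i : Set G) := by
    intro x hxA hfix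
    obtain ⟨j, hj⟩ := hperm x i
    by_cases hij : j = i
    · exact conjSubgroup_eq_iff_mem_normalizer.1 (by rwa [hij] at hj)
    · exfalso
      apply hDbot
      rw [eq_bot_iff, ← hdisj i j (fun h => hij h.symm)]
      refine le_inf inf_le_left ?_
      have : D = conjSubgroup x (S i) ⊓ conjSubgroup x A := by
        rw [← conjSubgroup_inf, hfix]
      rw [this, hj]
      exact inf_le_left
  have centr_norm : ∀ x ∈ A, (∀ d ∈ D, x * d = d * x) → x ∈ Subgroup.normalizer (S i : Set G) := by
    intro x hxA hcent
    apply stab x hxA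
    ext d
    rw [mem_conjSubgroup]
    constructor
    · intro hd
      have hc := hcent _ hd
      have e : d = x * (x⁻¹ * d * x) * x⁻¹ := by group
      have e2 : d = x⁻¹ * d * x := by
        calc d = x * (x⁻¹ * d * x) * x⁻¹ := e
        _ = (x⁻¹ * d * x) * x * x⁻¹ := by rw [hc]
        _ = x⁻¹ * d * x := by group
      rw [show d ∈ D ↔ x⁻¹ * d * x ∈ D from by rw [← e2]]
      exact hd
    · intro hd
      have hc := hcent _ hd
      have e2 : x⁻¹ * d * x = d := by
        calc x⁻¹ * d * x = x⁻¹ * (d * x) := by group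
        _ = x⁻¹ * (x * d) := by rw [← hc]
        _ = d := by group
      rw [e2]
      exact hd
  set EG := ⨆ k, (S k ⊓ A) with hEGdef
  have hEG_norm : EG ≤ Subgroup.normalizer (S i : Set G) :=
    iSup_le fun k => le_trans inf_le_left (S_le_normalizer hcomm k i)
  have hEG_A : EG ≤ A := iSup_le fun k => inf_le_right
  have hE : (EG.subgroupOf A).Normal := by
    constructor
    intro x hx g
    rw [Subgroup.mem_subgroupOf] at hx ⊢
    have hle : conjSubgroup (g : G) EG ≤ EG := by
      rw [hEGdef, conjSubgroup_iSup]
      apply iSup_le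
      intro k
      obtain ⟨j, hj⟩ := hperm (g : G) k
      rw [conjSubgroup_inf, hj, conjSubgroup_eq_self_of_mem g.2]
      exact le_iSup (fun k => S k ⊓ A) j
    have : (g : G) * (x : G) * (g : G)⁻¹ ∈ conjSubgroup (g : G) EG := ⟨x, hx, rfl⟩
    simpa using hle this
  -- the target subgroup, pulled back to A
  rw [Subgroup.map_le_iff_le_comap]
  rw [generalizedFitting]
  apply sup_le
  · -- Fitting subgroup part
    apply sSup_le
    rintro P ⟨hPnorm, hPnil⟩
    intro x hxP
    obtain ⟨l, hl, hlprod⟩ := exists_prime_pow_decomp x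
    rw [← hlprod]
    apply Subgroup.list_prod_mem
    intro z hz
    obtain ⟨hz1, p, hp, hord⟩ := hl z hz
    have hzP : z ∈ P := Subgroup.zpowers_le.2 hxP hz1
    obtain ⟨W, hWnorm, hWp, hzW⟩ := p_elt_in_normal_psubgroup hPnorm hPnil hp hzP hord
    rw [Subgroup.mem_comap]
    -- show (z : G) normalizes S i
    obtain ⟨j, hj⟩ := hperm (z : G) i
    by_cases hij : j = i
    · exact conjSubgroup_eq_iff_mem_normalizer.1 (by rwa [hij] at hj)
    exfalso
    -- find an element of D of prime order q ≠ p
    have hnp : ¬ IsPGroup p (S i ⊓ A : Subgroup G) := fun h => hbad ⟨p, hp, h⟩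
    unfold IsPGroup at hnp
    push_neg at hnp
    obtain ⟨d, hd⟩ := hnp
    have hdord : orderOf d ≠ 0 := by
      have : Finite (S i ⊓ A : Subgroup G) := inferInstance
      exact (orderOf_pos d).ne'
    set n := orderOf d with hndef
    have hm1 : ordCompl[p] n ≠ 1 := by
      intro h
      have hn : n = p ^ n.factorization p := by
        have := Nat.ordProj_mul_ordCompl_eq_self n p
        rw [h, mul_one] at this
        omega
      apply hd (n.factorization p)
      rw [← hn, hndef]
      exact pow_orderOf_eq_one d
    set q := (ordCompl[p] n).minFac with hqdef
    have hq : q.Prime := Nat.minFac_prime hm1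
    have hqn : q ∣ n := by
      have h1 : q ∣ ordCompl[p] n := Nat.minFac_dvd (ordCompl[p] n)
      exact dvd_trans h1 (Nat.ordCompl_dvd n p)
    have hqp : q ≠ p := by
      intro heq
      have h2 : q ∣ ordCompl[p] n := Nat.minFac_dvd (ordCompl[p] n)
      rw [heq] at h2
      exact Nat.not_dvd_ordCompl hp hdord h2
    set d1 := d ^ (n / q) with hd1def
    have hd1ord : orderOf d1 = q := orderOf_pow_orderOf_div hdord hqn
    set δ := (d1 : G) with hδdef
    have hδord : orderOf δ = q := by
      rw [← hd1ord]
      exact orderOf_injective (S i ⊓ A).subtype (S i ⊓ A).subtype_injective d1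
    have hδD : δ ∈ D := d1.2
    have hδ1 : δ ≠ 1 := by
      intro h
      rw [h, orderOf_one] at hδord
      exact hq.one_lt.ne' hδord.symm
    set ε := (z : G) * δ * (z : G)⁻¹ with hεdef
    have hε : ε ∈ S j ⊓ A := by
      have : ε ∈ conjSubgroup (z : G) D := ⟨δ, hδD, rfl⟩
      rw [hDdef, conjSubgroup_inf, hj, conjSubgroup_eq_self_of_mem z.2] at this
      exact this
    have hcommδε : δ * ε = ε * δ :=
      hcomm i j (fun h => hij h.symm) δ hδD.1 ε hε.1
    set cc := δ⁻¹ * ε with hccdef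
    have hccW : cc ∈ W.map A.subtype := by
      set δA : A := ⟨δ, hδD.2⟩ with hδAdef
      have h1 : δA⁻¹ * z * δA ∈ W := by
        have := hWnorm.conj_mem z hzW δA⁻¹
        rwa [inv_inv] at this
      have h2 : δA⁻¹ * z * δA * z⁻¹ ∈ W := W.mul_mem h1 (W.inv_mem hzW)
      refine ⟨δA⁻¹ * z * δA * z⁻¹, h2, ?_⟩
      show A.subtype (δA⁻¹ * z * δA * z⁻¹) = cc
      rw [map_mul, map_mul, map_mul, map_inv, map_inv]
      have e1 : A.subtype δA = δ := rfl
      have e2 : A.subtype z = (z : G) := rfl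
      rw [e1, e2, hccdef, hεdef]
      group
    have hδq : δ ^ q = 1 := by rw [← hδord]; exact pow_orderOf_eq_one δ
    have hccq : cc ^ q = 1 := by
      have hcom : Commute δ⁻¹ ε := (show Commute δ ε from hcommδε).inv_left
      have hεconj : ε = (MulAut.conj (z : G)) δ := by
        rw [hεdef, MulAut.conj_apply]
      have hεq : ε ^ q = 1 := by
        rw [hεconj, ← map_pow, hδq, map_one]
      have hδiq : (δ⁻¹) ^ q = 1 := by rw [inv_pow, hδq, inv_one]
      rw [hccdef, hcom.mul_pow, hδiq, hεq, mul_one]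
    have hcc1 : cc = 1 := by
      have hpg : IsPGroup p (W.map A.subtype : Subgroup G) := hWp.map A.subtype
      obtain ⟨k, hk⟩ := hpg ⟨cc, hccW⟩
      have hkG : cc ^ (p ^ k) = 1 := by
        simpa using congrArg Subtype.val hk
      have h1 : orderOf cc ∣ q := orderOf_dvd_of_pow_eq_one hccq
      have h2 : orderOf cc ∣ p ^ k := orderOf_dvd_of_pow_eq_one hkG
      rcases (Nat.dvd_prime hq).1 h1 with h | h
      · rwa [orderOf_eq_one_iff] at h
      · exfalso
        apply hqp
        have hqpk : q ∣ p ^ k := h ▸ h2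
        exact (Nat.prime_dvd_prime_iff_eq hq hp).1 (hq.dvd_of_dvd_pow hqpk)
    have hεδ : ε = δ := by
      have h0 : δ⁻¹ * ε = 1 := by rw [← hccdef]; exact hcc1
      have := inv_mul_eq_one.1 h0
      exact this.symm
    apply hδ1
    have hmem2 : δ ∈ S i ⊓ S j := ⟨hδD.1, hεδ ▸ hε.1⟩
    rwa [hdisj i j (fun h => hij h.symm), Subgroup.mem_bot] at hmem2
  · -- quasisimple components part
    apply sSup_le
    rintro Q ⟨hQS, hQq⟩
    rcases quasisimple_dichotomy hQS hQq hE with hle | hcent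
    · intro x hx
      rw [Subgroup.mem_comap]
      have hxE : x ∈ EG.subgroupOf A := hle hx
      rw [Subgroup.mem_subgroupOf] at hxE
      exact hEG_norm hxE
    · intro x hx
      rw [Subgroup.mem_comap]
      apply centr_norm (x : G) x.2
      intro d hd
      have hdE : (⟨d, hd.2⟩ : A) ∈ EG.subgroupOf A := by
        rw [Subgroup.mem_subgroupOf]
        exact le_iSup (fun k => S k ⊓ A) i hd
      have hcd := hcent x hx ⟨d, hd.2⟩ hdE
      simpa using congrArg Subtype.val hcd

end KAKB

/-- In a coprimely factorized finite group `G = AB` with trivial soluble radical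
and `F*(G) = S 1 × ⋯ × S m` a direct product of nonabelian simple subgroups
permuted by `G`, the subgroups `K_A = ⋂ {N_G(S i) : S i ⊓ A not a p-group}` and
`K_B = ⋂ {N_G(S i) : S i ⊓ B not a p-group}` are normal in `G`, `F*(A) ≤ K_A`
and `F*(B) ≤ K_B`. -/
theorem KA_KB_normal_and_contain_generalizedFitting
{G : Type*} [Group G] [Finite G] (A B : Subgroup G)
    (hfact : ∀ g : G, ∃ a ∈ A, ∃ b ∈ B, g = a * b)
    (hcop : Nat.Coprime (Nat.card A) (Nat.card B))
    (hrad : solubleRadical G = ⊥)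
    (m : ℕ) (S : Fin m → Subgroup G)
    (hsimple : ∀ i, IsSimpleGroup (S i))
    (hna : ∀ i, ∃ a b : S i, a * b ≠ b * a)
    (hindep : iSupIndep S)
    (hsup : ⨆ i, S i = generalizedFitting G)
    (hcomm : ∀ i j, i ≠ j → ∀ x ∈ S i, ∀ y ∈ S j, x * y = y * x)
    (hperm : ∀ (g : G) (i : Fin m), ∃ j, conjSubgroup g (S i) = S j)
    (KA KB : Subgroup G)
    (hKA : KA = ⨅ i : {i : Fin m // ¬ ∃ p : ℕ, p.Prime ∧
      IsPGroup p (S i ⊓ A : Subgroup G)}, Subgroup.normalizer (S i.1 : Set G))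
    (hKB : KB = ⨅ i : {i : Fin m // ¬ ∃ p : ℕ, p.Prime ∧
      IsPGroup p (S i ⊓ B : Subgroup G)}, Subgroup.normalizer (S i.1 : Set G)) :
    KA.Normal ∧ KB.Normal ∧
    Subgroup.map A.subtype (generalizedFitting A) ≤ KA ∧
    Subgroup.map B.subtype (generalizedFitting B) ≤ KB := by
  subst hKA
  subst hKB
  have hfactB : ∀ g : G, ∃ b ∈ B, ∃ a ∈ A, g = b * a := by
    intro g
    obtain ⟨a, ha, b, hb, hab⟩ := hfact g⁻¹
    exact ⟨b⁻¹, B.inv_mem hb, a⁻¹, A.inv_mem ha, by rw [← mul_inv_rev, ← hab, inv_inv]⟩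
  refine ⟨?_, ?_, ?_, ?_⟩
  · exact KAKB.K_normal A B hfact hcop S hcomm hperm
  · exact KAKB.K_normal B A hfactB hcop.symm S hcomm hperm
  · apply le_iInf
    rintro ⟨i, hbad⟩
    exact KAKB.genFitting_le_normalizer A S hindep hcomm hperm i hbad
  · apply le_iInf
    rintro ⟨i, hbad⟩
    exact KAKB.genFitting_le_normalizer B S hindep hcomm hperm i hbad
end
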